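/- Assume p = 2, (q, n) is admissible, and n > 1. If x ∈ AGL_1^{(n)}(q) has order n and y ∈ AGL_1^{(n)}(q) is a nontrivial translation v ↦ v + b with b ≠ 0, then x and y generate AGL_1^{(n)}(q). -/

import Mathlib

/-- Let `p = 2`, `e ≥ 1`, `q = p^e`, `F` a finite field with `q`
elements, `n` a divisor of `q - 1`, and `S` the subgroup of order `n` of `Fˣ`.  Assume
`(q, n)` is admissible and `n > 1`, and let `A = AGL₁⁽ⁿ⁾(q)` be the subgroup of
`Perm F` of affine maps `v ↦ a v + b` with `a ∈ S`, `b ∈ F`.  If `x ∈ A` has order `n`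
and `y ∈ A` is a nontrivial translation `v ↦ v + b` with `b ≠ 0`, then `x` and `y`
generate `A`. -/
theorem AGL_generated_by_order_n_and_translation
    (p e n : ℕ) (hp : p.Prime) (hp2 : p = 2) (he : 1 ≤ e)
    (F : Type) [Field F] [Fintype F] (hq : Fintype.card F = p ^ e)
    (hn : n ∣ p ^ e - 1)
    (S : Subgroup Fˣ) (hS : Nat.card S = n)
    (hadm : IsLeast {i : ℕ | 1 ≤ i ∧ p ^ i ≡ 1 [MOD n]} e)
    (hn1 : 1 < n)
    (A : Subgroup (Equiv.Perm F))
    (hA : ∀ g : Equiv.Perm F,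
      g ∈ A ↔ ∃ a ∈ S, ∃ b : F, ∀ v : F, g v = (a : F) * v + b)
    (x y : Equiv.Perm F) (hx : x ∈ A) (hxo : orderOf x = n)
    (hyA : y ∈ A) (b : F) (hb : b ≠ 0) (hy : ∀ v : F, y v = v + b) :
    Subgroup.closure ({x, y} : Set (Equiv.Perm F)) = A := by
  subst hp2
  -- the multiplier of x
  obtain ⟨a, haS, c, hxeq⟩ := (hA x).mp hx
  -- characteristic 2
  haveI hchar2 : CharP F 2 := by
    haveI : CharP F (ringChar F) := ringChar.charP F
    have hrprime : (ringChar F).Prime := CharP.char_is_prime F (ringChar F)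
    haveI : Fact (ringChar F).Prime := ⟨hrprime⟩
    obtain ⟨k, -, hk⟩ := FiniteField.card F (ringChar F)
    have hdvd : ringChar F ∣ 2 ^ e := by
      rw [← hq, hk]
      exact dvd_pow_self _ (by positivity)
    have : ringChar F = 2 := by
      have := (Nat.Prime.dvd_of_dvd_pow hrprime hdvd)
      exact (Nat.prime_dvd_prime_iff_eq hrprime Nat.prime_two).mp this
    rwa [this] at ‹CharP F (ringChar F)›
  have haddself : ∀ t : F, t + t = 0 := fun t => CharTwo.add_self_eq_zero t
  -- the power formula
  have hpow : ∀ k : ℕ, ∀ v : F, (x ^ k) v = (a : F) ^ k * v + (x ^ k) 0 := by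
    intro k
    induction k with
    | zero => intro v; simp
    | succ k ih =>
      intro v
      have h1 : (x ^ (k + 1)) v = x ((x ^ k) v) := by
        rw [pow_succ' x k]; rfl
      have h2 : (x ^ (k + 1)) 0 = x ((x ^ k) 0) := by
        rw [pow_succ' x k]; rfl
      rw [h1, h2, ih v, ih 0, hxeq, hxeq]
      ring
  -- a has order n
  have hn0 : 0 < n := by omega
  have hxn : x ^ n = 1 := by rw [← hxo]; exact pow_orderOf_eq_one x
  have hanF : (a : F) ^ n = 1 := by
    have h := hpow n 1
    rw [hxn] at h
    simpa using h.symm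
  have han : a ^ n = 1 := by
    ext
    push_cast
    exact hanF
  have horda : orderOf a = n := by
    set m := orderOf a with hm
    have hmn : m ∣ n := orderOf_dvd_of_pow_eq_one han
    have hamF : (a : F) ^ m = 1 := by
      have : a ^ m = 1 := pow_orderOf_eq_one a
      calc (a : F) ^ m = ((a ^ m : Fˣ) : F) := by push_cast; ring
        _ = 1 := by rw [this]; rfl
    have htrans : ∀ v : F, (x ^ m) v = v + (x ^ m) 0 := by
      intro v; rw [hpow m v, hamF, one_mul]
    have hsq : (x ^ m) * (x ^ m) = 1 := by
      ext v
      have : ((x ^ m) * (x ^ m)) v = (x ^ m) ((x ^ m) v) := rfl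
      rw [this, htrans, htrans v, add_assoc, haddself, add_zero]
      rfl
    have h2m : x ^ (m * 2) = 1 := by rw [pow_mul, pow_two, hsq]
    have hnd : n ∣ m * 2 := by rw [← hxo]; exact orderOf_dvd_of_pow_eq_one h2m
    have hodd : Odd n := by
      have : Odd (2 ^ e - 1) := by
        have h2e : 2 ≤ 2 ^ e := by
          calc 2 = 2 ^ 1 := rfl
          _ ≤ 2 ^ e := Nat.pow_le_pow_right (by norm_num) he
        have heven : Even (2 ^ e) := by
          exact (Nat.even_pow' (by omega)).mpr even_two
        rcases heven with ⟨t, ht⟩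
        exact ⟨t - 1, by omega⟩
      exact this.of_dvd_nat hn
    have hcop : Nat.Coprime n 2 := by
      rw [Nat.coprime_two_right]; exact hodd
    have : n ∣ m := (Nat.Coprime.dvd_of_dvd_mul_right hcop) hnd
    exact Nat.dvd_antisymm hmn this
  -- V: the set of translations in the closure
  set G := Subgroup.closure ({x, y} : Set (Equiv.Perm F)) with hG
  have hxG : x ∈ G := Subgroup.subset_closure (Set.mem_insert _ _)
  have hyG : y ∈ G := Subgroup.subset_closure (Set.mem_insert_of_mem _ rfl)
  have haddRight_mul : ∀ c d : F,
      Equiv.addRight c * Equiv.addRight d = Equiv.addRight (c + d) := by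
    intro c d
    ext v
    have : (Equiv.addRight c * Equiv.addRight d) v = (v + d) + c := rfl
    rw [this]
    show _ = v + (c + d)
    ring
  let V : AddSubgroup F :=
    { carrier := {c : F | Equiv.addRight c ∈ G}
      zero_mem' := by
        have : Equiv.addRight (0 : F) = 1 := by ext v; simp
        simp only [Set.mem_setOf_eq, this]
        exact Subgroup.one_mem G
      add_mem' := by
        intro c d hc hd
        simp only [Set.mem_setOf_eq] at *
        rw [← haddRight_mul]
        exact Subgroup.mul_mem G hc hd
      neg_mem' := by
        intro c hc
        simp only [Set.mem_setOf_eq] at *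
        have : Equiv.addRight (-c) = (Equiv.addRight c)⁻¹ := by
          have h := haddRight_mul (-c) c
          rw [neg_add_cancel] at h
          have h1 : Equiv.addRight (0 : F) = 1 := by ext v; simp
          rw [h1] at h
          exact eq_inv_of_mul_eq_one_left h
        rw [this]
        exact Subgroup.inv_mem G hc }
  have hVmem : ∀ c : F, c ∈ V ↔ Equiv.addRight c ∈ G := fun c => Iff.rfl
  have hbV : b ∈ V := by
    rw [hVmem]
    have : Equiv.addRight b = y := by ext v; rw [hy v]; rfl
    rwa [this]
  have hclosV : ∀ c : F, c ∈ V → (a : F) * c ∈ V := by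
    intro c hc
    rw [hVmem] at hc ⊢
    have key : x * Equiv.addRight c = Equiv.addRight ((a : F) * c) * x := by
      ext v
      have h1 : (x * Equiv.addRight c) v = x (v + c) := rfl
      have h2 : (Equiv.addRight ((a : F) * c) * x) v = x v + (a : F) * c := rfl
      rw [h1, h2, hxeq, hxeq]
      ring
    have : Equiv.addRight ((a : F) * c) = x * Equiv.addRight c * x⁻¹ := by
      rw [key]
      group
    rw [this]
    exact Subgroup.mul_mem G (Subgroup.mul_mem G hxG hc) (Subgroup.inv_mem G hxG)
  -- the stabilizer ring R
  let R : Subring F :=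
    { carrier := {r : F | ∀ c ∈ V, r * c ∈ V}
      one_mem' := by intro c hc; rwa [one_mul]
      mul_mem' := by
        intro r s hr hs c hc
        rw [mul_assoc]
        exact hr _ (hs _ hc)
      zero_mem' := by intro c hc; rw [zero_mul]; exact V.zero_mem
      add_mem' := by
        intro r s hr hs c hc
        rw [add_mul]
        exact V.add_mem (hr _ hc) (hs _ hc)
      neg_mem' := by
        intro r hr c hc
        rw [neg_mul]
        exact V.neg_mem (hr _ hc) }
  have haR : (a : F) ∈ R := hclosV
  -- R = ⊤ by cardinality
  have hcard_dvd : Nat.card R ∣ 2 ^ e := by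
    have := AddSubgroup.card_addSubgroup_dvd_card (R.toAddSubgroup)
    rwa [Nat.card_eq_fintype_card (α := F), hq] at this
  obtain ⟨d, hde, hcardR⟩ := (Nat.dvd_prime_pow Nat.prime_two).mp hcard_dvd
  -- the nonzero elements of R form a subgroup of Fˣ containing a
  let Rx : Subgroup Fˣ :=
    { carrier := {w : Fˣ | (w : F) ∈ R}
      one_mem' := by
        show ((1 : Fˣ) : F) ∈ R
        rw [Units.val_one]
        exact R.one_mem
      mul_mem' := by
        intro w z hw hz
        show ((w * z : Fˣ) : F) ∈ R
        rw [Units.val_mul]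
        exact R.mul_mem hw hz
      inv_mem' := by
        intro w hw
        show ((w⁻¹ : Fˣ) : F) ∈ R
        have hk : 0 < orderOf w := orderOf_pos w
        have hwinv : w⁻¹ = w ^ (orderOf w - 1) := by
          have h1 : w * w⁻¹ = w * w ^ (orderOf w - 1) := by
            rw [mul_inv_cancel, ← pow_succ']
            have h2 : orderOf w - 1 + 1 = orderOf w := by omega
            rw [h2, pow_orderOf_eq_one]
          exact mul_left_cancel h1
        rw [hwinv, Units.val_pow_eq_pow_val]
        exact pow_mem hw _ }
  have haRx : a ∈ Rx := haR
  have hsub : Subgroup.zpowers a ≤ Rx := (Subgroup.zpowers_le).mpr haRx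
  have hRnontriv : Nontrivial R := ⟨⟨0, 1, by
    intro h
    have : (0 : F) = 1 := congrArg Subtype.val h
    exact zero_ne_one this⟩⟩
  have hd1 : 1 ≤ d := by
    by_contra hd
    have hd0 : d = 0 := by omega
    have : Nat.card R = 1 := by rw [hcardR, hd0]; rfl
    have := Finite.one_lt_card_iff_nontrivial (α := R) |>.mpr hRnontriv
    omega
  have hnd : n ∣ 2 ^ d - 1 := by
    have hdvd : n ∣ Nat.card Rx := by
      rw [← horda, ← Nat.card_zpowers]
      exact Subgroup.card_dvd_of_le hsub
    have hequiv : Rx ≃ {r : R // r ≠ 0} :=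
      { toFun := fun w => ⟨⟨(w.1 : F), w.2⟩, fun h =>
          Units.ne_zero w.1 (congrArg Subtype.val h)⟩
        invFun := fun r => ⟨Units.mk0 (r.1 : F)
          (fun h0 => r.2 (Subtype.ext h0)), r.1.2⟩
        left_inv := fun w => Subtype.ext (Units.ext rfl)
        right_inv := fun r => Subtype.ext (Subtype.ext rfl) }
    have hcardne : Nat.card {r : R // r ≠ 0} = Nat.card R - 1 := by
      classical
      haveI : Fintype R := Fintype.ofFinite _
      rw [Nat.card_eq_fintype_card, Nat.card_eq_fintype_card]
      have h1 : Fintype.card {r : R // ¬ r = 0} =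
          Fintype.card R - Fintype.card {r : R // r = 0} :=
        Fintype.card_subtype_compl _
      have h2 : Fintype.card {r : R // r = 0} = 1 := Fintype.card_subtype_eq _
      rw [h2] at h1
      exact h1
    rw [Nat.card_congr hequiv, hcardne, hcardR] at hdvd
    exact hdvd
  have hmod : 2 ^ d ≡ 1 [MOD n] := by
    have h1 : 1 ≤ 2 ^ d := Nat.one_le_two_pow
    exact ((Nat.modEq_iff_dvd' h1).mpr hnd).symm
  have hed : e ≤ d := hadm.2 ⟨hd1, hmod⟩
  have hde' : d = e := le_antisymm hde hed
  have hRtop : ∀ w : F, w ∈ R := by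
    haveI : Fintype R := Fintype.ofFinite _
    have hcards : Fintype.card R = Fintype.card F := by
      rw [← Nat.card_eq_fintype_card (α := R), hcardR, hde', hq]
    have hinj : Function.Injective (R.subtype) := Subtype.val_injective
    have hbij : Function.Bijective (R.subtype) :=
      (Fintype.bijective_iff_injective_and_card _).mpr ⟨hinj, hcards⟩
    intro w
    obtain ⟨⟨r, hr⟩, hrw⟩ := hbij.2 w
    exact (show R.subtype ⟨r, hr⟩ = w from hrw) ▸ hr
  -- hence V = everything
  have hVtop : ∀ c : F, c ∈ V := by
    intro c
    have : c * b⁻¹ * b ∈ V := hRtop (c * b⁻¹) b hbV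
    rwa [mul_assoc, inv_mul_cancel₀ hb, mul_one] at this
  -- a generates S
  have hS' : ∀ s : Fˣ, s ∈ S → ∃ k : ℕ, a ^ k = s := by
    intro s hsS
    let a₀ : S := ⟨a, haS⟩
    have horda₀ : orderOf a₀ = n := by
      have := orderOf_injective S.subtype (Subgroup.subtype_injective S) a₀
      rw [show S.subtype a₀ = a from rfl, horda] at this
      exact this.symm
    have hzt : Subgroup.zpowers a₀ = ⊤ := by
      apply Subgroup.eq_top_of_card_eq
      rw [Nat.card_zpowers, horda₀, hS]
    have hmem : (⟨s, hsS⟩ : S) ∈ Subgroup.zpowers a₀ := hzt ▸ Subgroup.mem_top _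
    have hmem' : (⟨s, hsS⟩ : S) ∈ Submonoid.powers a₀ :=
      mem_powers_iff_mem_zpowers.mpr hmem
    obtain ⟨k, hk⟩ := hmem'
    refine ⟨k, ?_⟩
    have := congrArg (S.subtype) hk
    simpa using this
  -- final assembly
  apply le_antisymm
  · rw [hG]
    apply (Subgroup.closure_le A).mpr
    intro z hz
    rcases hz with rfl | hz
    · exact hx
    · rw [Set.mem_singleton_iff] at hz
      subst hz
      exact hyA
  · intro g hg
    obtain ⟨a', ha'S, b', hgeq⟩ := (hA g).mp hg
    obtain ⟨k, hk⟩ := hS' a' ha'S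
    have ha'F : (a' : F) = (a : F) ^ k := by
      rw [← hk]; push_cast; ring
    have hxkG : x ^ k ∈ G := Subgroup.pow_mem G hxG k
    have ht : g * (x ^ k)⁻¹ = Equiv.addRight (b' - (x ^ k) 0) := by
      ext w
      have h1 : (g * (x ^ k)⁻¹) w = g ((x ^ k)⁻¹ w) := rfl
      set z := (x ^ k)⁻¹ w with hz
      have hxz : (x ^ k) z = w := by
        rw [hz]
        exact Equiv.apply_symm_apply _ _
      have hw : (a : F) ^ k * z + (x ^ k) 0 = w := by rw [← hpow k z, hxz]
      rw [h1, hgeq, ha'F]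
      show _ = w + (b' - (x ^ k) 0)
      rw [← hw]
      ring
    have htG : g * (x ^ k)⁻¹ ∈ G := by
      rw [ht]
      exact hVtop (b' - (x ^ k) 0)
    have : g = (g * (x ^ k)⁻¹) * x ^ k := by group
    rw [this]
    exact Subgroup.mul_mem G htG hxkG
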